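/- arXiv:2312.13609 — 2 statements merged into one kernel-verified Lean document; each statement's English description precedes it below -/
import Mathlib

section
/- Let β be a non-negative increasing sequence tending to infinity such that Λ_∞(β) is nuclear and β satisfies: there exists M with β_s ≤ M(β_{s-t} + β_t) for all s > t. Let θ_0 ≠ 0. The lower triangular Toeplitz operator T̂_θ : K(a_{n,k}) → Λ_∞(β) is compact if and only if θ ∈ Λ_∞(β) and there exists m ∈ ℕ such that for all k ∈ ℕ there is C > 0 with e^{kβ_n} ≤ C a_{n,m} for all n ≥ k. -/
open scoped BigOperators
noncomputable section

/-- A Köthe matrix: non-negative entries, each row eventually positive,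
rows non-decreasing in the second index. -/
structure IsKotheMatrix (a : ℕ → ℕ → ℝ) : Prop where
  nonneg : ∀ n k, 0 ≤ a n k
  pos : ∀ n, ∃ k, 0 < a n k
  mono : ∀ n k, a n k ≤ a n (k + 1)

/-- Membership in the Köthe space `K(a)`. -/
def InKothe (a : ℕ → ℕ → ℝ) (x : ℕ → ℝ) : Prop :=
  ∀ k, Summable fun n => |x n| * a n k

/-- The `k`-th seminorm of the Köthe space `K(a)`. -/
def kNorm (a : ℕ → ℕ → ℝ) (k : ℕ) (x : ℕ → ℝ) : ℝ :=
  ∑' n, |x n| * a n k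

/-- Grothendieck–Pietsch nuclearity criterion for a Köthe space. -/
def IsNuclearKothe (a : ℕ → ℕ → ℝ) : Prop :=
  ∀ k, ∃ l, k < l ∧ Summable fun n => a n k / a n l

/-- The `n`-th unit vector. -/
def unitVec (n : ℕ) : ℕ → ℝ := fun j => if j = n then 1 else 0

/-- Weight of the finite type power series space `Λ₁(β)`. -/
def finW (β : ℕ → ℝ) (k : ℕ) (n : ℕ) : ℝ := Real.exp (-(β n) / (k : ℝ))

/-- Weight of the infinite type power series space `Λ_∞(β)`. -/
def infW (β : ℕ → ℝ) (k : ℕ) (n : ℕ) : ℝ := Real.exp ((k : ℝ) * β n)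

/-- The `k`-th seminorm of `Λ₁(β)` (for `0 < k`). -/
def finNorm (β : ℕ → ℝ) (k : ℕ) (x : ℕ → ℝ) : ℝ := ∑' n, |x n| * finW β k n

/-- The `k`-th seminorm of `Λ_∞(β)`. -/
def infNorm (β : ℕ → ℝ) (k : ℕ) (x : ℕ → ℝ) : ℝ := ∑' n, |x n| * infW β k n

/-- Membership in `Λ₁(β)`. -/
def memFin (β : ℕ → ℝ) (x : ℕ → ℝ) : Prop :=
  ∀ k : ℕ, 0 < k → Summable fun n => |x n| * finW β k n

/-- Membership in `Λ_∞(β)`. -/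
def memInf (β : ℕ → ℝ) (x : ℕ → ℝ) : Prop :=
  ∀ k : ℕ, 0 < k → Summable fun n => |x n| * infW β k n

/-- Lower triangular Toeplitz operator `T̂_θ`, `T̂_θ e_n = ∑_{j ≥ n} θ_{j-n} e_j`. -/
def hatT (θ : ℕ → ℝ) (x : ℕ → ℝ) : ℕ → ℝ :=
  fun j => ∑ i ∈ Finset.range (j + 1), θ (j - i) * x i

/-- Upper triangular Toeplitz operator `Ť_θ`, `Ť_θ e_n = ∑_{j ≤ n} θ_{n-j} e_j`. -/
def checkT (θ : ℕ → ℝ) (x : ℕ → ℝ) : ℕ → ℝ :=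
  fun j => ∑' i, θ i * x (j + i)

/-- Operator defined by a matrix acting on sequences. -/
def matOp (t : ℕ → ℕ → ℝ) (x : ℕ → ℝ) : ℕ → ℝ :=
  fun j => ∑' n, t j n * x n

/-- The growth condition (3.5): `β_s ≤ M (β_{s-t} + β_t)` for all `s > t`. -/
def GrowthCond (β : ℕ → ℝ) (M : ℕ) : Prop :=
  ∀ t s : ℕ, t < s → β s ≤ (M : ℝ) * (β (s - t) + β t)


section Aux

lemma unitVec_inKothe (a : ℕ → ℕ → ℝ) (n : ℕ) : InKothe a (unitVec n) := by
  intro k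
  apply summable_of_ne_finset_zero (s := {n})
  intro j hj
  simp only [Finset.mem_singleton] at hj
  simp [unitVec, hj]

lemma hatT_unitVec (θ : ℕ → ℝ) (n : ℕ) :
    hatT θ (unitVec n) = fun j => if n ≤ j then θ (j - n) else 0 := by
  funext j
  simp only [hatT, unitVec, mul_ite, mul_one, mul_zero]
  rw [Finset.sum_ite_eq' (Finset.range (j+1)) n (fun i => θ (j - i))]
  simp only [Finset.mem_range, Nat.lt_succ_iff]

lemma kNorm_unitVec (a : ℕ → ℕ → ℝ) (m n : ℕ) : kNorm a m (unitVec n) = a n m := by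
  unfold kNorm
  rw [tsum_eq_single n]
  · simp [unitVec]
  · intro j hj; simp [unitVec, hj]

end Aux

/-- Under nuclearity of `Λ_∞(β)` and the growth condition on `β`,
`T̂_θ : K(a) → Λ_∞(β)` is compact iff `θ ∈ Λ_∞(β)` and there is `m` such that for all
`k` there is `C > 0` with `e^{k β_n} ≤ C a_{n,m}` for all `n ≥ k`. -/

theorem stmt9 (a : ℕ → ℕ → ℝ) (ha : IsKotheMatrix a)
    (β : ℕ → ℝ) (hβ0 : ∀ n, 0 ≤ β n) (hβm : Monotone β)
    (hβi : Filter.Tendsto β Filter.atTop Filter.atTop)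
    (hnuc : ∃ C > 0, ∀ n : ℕ, 1 ≤ n → Real.log n ≤ C * β n)
    (M : ℕ) (hM : GrowthCond β M)
    (θ : ℕ → ℝ) (hθ : θ 0 ≠ 0) :
    ((∀ x, InKothe a x → memInf β (hatT θ x)) ∧
      ∃ m, ∀ k : ℕ, 0 < k → ∃ C > 0, ∀ x, InKothe a x →
        infNorm β k (hatT θ x) ≤ C * kNorm a m x)
    ↔ (memInf β θ ∧
       ∃ m, ∀ k : ℕ, 0 < k → ∃ C > 0, ∀ n, k ≤ n → infW β k n ≤ C * a n m) := by

  have expos : ∀ (k : ℕ) (n : ℕ), (0:ℝ) < infW β k n := fun k n => Real.exp_pos _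
  constructor
  · rintro ⟨h1, m, h2⟩
    have hθmem : memInf β θ := by
      intro k hk
      have hs := h1 (unitVec 0) (unitVec_inKothe a 0) k hk
      rw [hatT_unitVec] at hs
      simpa using hs
    refine ⟨hθmem, m, fun k hk => ?_⟩
    obtain ⟨C, hC, hCx⟩ := h2 k hk
    have hθpos : (0:ℝ) < |θ 0| := abs_pos.2 hθ
    refine ⟨C / |θ 0|, div_pos hC hθpos, fun n _ => ?_⟩
    have hsum := h1 (unitVec n) (unitVec_inKothe a n) k hk
    have hterm : |θ 0| * infW β k n ≤ infNorm β k (hatT θ (unitVec n)) := by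
      have hle := Summable.le_tsum hsum n (fun j _ =>
        mul_nonneg (abs_nonneg _) (Real.exp_pos _).le)
      rw [hatT_unitVec] at hle ⊢
      simpa [infNorm] using hle
    have hb := hCx (unitVec n) (unitVec_inKothe a n)
    rw [kNorm_unitVec] at hb
    have : |θ 0| * infW β k n ≤ C * a n m := hterm.trans hb
    rw [div_mul_eq_mul_div, le_div_iff₀ hθpos, mul_comm]
    linarith
  · rintro ⟨hθmem, m, h2⟩
    -- positivity of a n m' for suitable m'
    obtain ⟨C₁, hC₁, hC₁x⟩ := h2 1 one_pos
    obtain ⟨k₀, hk₀⟩ := ha.pos 0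
    set m' := max m k₀ with hm'
    have haMono : ∀ n, Monotone (a n) := fun n => monotone_nat_of_le_succ (ha.mono n)
    have ham' : ∀ n, 0 < a n m' := by
      intro n
      rcases Nat.eq_zero_or_pos n with h | h
      · subst h; exact hk₀.trans_le (haMono 0 (le_max_right _ _))
      · have h1n := hC₁x n h
        have : (0:ℝ) < C₁ * a n m := (expos 1 n).trans_le h1n
        have hnm : 0 < a n m := by nlinarith [ha.nonneg n m]
        exact hnm.trans_le (haMono n (le_max_left _ _))
    set M' := M + 1 with hM'
    have key : ∀ (k i j : ℕ), i ≤ j →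
        (k:ℝ) * β j ≤ (↑(k * M') * β (j - i) + ↑(k * M') * β i) := by
      intro k i j hij
      have hβM' : β j ≤ (M':ℝ) * (β (j - i) + β i) := by
        rcases lt_or_eq_of_le hij with h | h
        · have := hM i j h
          have hnn : (0:ℝ) ≤ β (j - i) + β i := add_nonneg (hβ0 _) (hβ0 _)
          have hMM' : (M:ℝ) ≤ (M':ℝ) := by push_cast [hM']; linarith
          nlinarith
        · subst h
          simp only [Nat.sub_self]
          have h1 : (1:ℝ) ≤ (M':ℝ) := by push_cast [hM']; have := Nat.cast_nonneg (α := ℝ) M; linarith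
          nlinarith [hβ0 0, hβ0 i]
      have hk0 : (0:ℝ) ≤ (k:ℝ) := Nat.cast_nonneg k
      have h := mul_le_mul_of_nonneg_left hβM' hk0
      push_cast [hM'] at h ⊢
      nlinarith
    -- main estimate
    have main : ∀ k : ℕ, 0 < k → ∃ C > 0, ∀ x, InKothe a x →
        Summable (fun j => |hatT θ x j| * infW β k j) ∧
        infNorm β k (hatT θ x) ≤ C * kNorm a m' x := by
      intro k hk
      set k' := k * M' with hk'def
      have hk' : 0 < k' := Nat.mul_pos hk (Nat.succ_pos M)
      set u : ℕ → ℝ := fun d => |θ d| * infW β k' d with hu_def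
      have hu : Summable u := hθmem k' hk'
      have hunn : ∀ d, 0 ≤ u d := fun d => mul_nonneg (abs_nonneg _) (expos k' d).le
      obtain ⟨C, hC, hCx⟩ := h2 k' hk'
      set D : ℝ := C + ∑ n ∈ Finset.range k', infW β k' n / a n m' with hD_def
      have hsum0 : (0:ℝ) ≤ ∑ n ∈ Finset.range k', infW β k' n / a n m' :=
        Finset.sum_nonneg fun n _ => div_nonneg (expos k' n).le (ham' n).le
      have hCD : C ≤ D := by rw [hD_def]; exact le_add_of_nonneg_right hsum0
      have hSD : (∑ n ∈ Finset.range k', infW β k' n / a n m') ≤ D := by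
        rw [hD_def]; exact le_add_of_nonneg_left hC.le
      have hDpos : 0 < D := lt_of_lt_of_le hC hCD
      have hstar : ∀ n, infW β k' n ≤ D * a n m' := by
        intro n
        rcases le_or_gt k' n with h | h
        · calc infW β k' n ≤ C * a n m := hCx n h
            _ ≤ C * a n m' :=
                mul_le_mul_of_nonneg_left (haMono n (le_max_left m k₀)) hC.le
            _ ≤ D * a n m' := mul_le_mul_of_nonneg_right hCD (ham' n).le
        · have hmem : n ∈ Finset.range k' := Finset.mem_range.2 h
          have hsingle : infW β k' n / a n m' ≤
              ∑ j ∈ Finset.range k', infW β k' j / a j m' :=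
            Finset.single_le_sum (f := fun j => infW β k' j / a j m')
              (fun j _ => div_nonneg (expos k' j).le (ham' j).le) hmem
          have : infW β k' n / a n m' ≤ D := hsingle.trans hSD
          calc infW β k' n = (infW β k' n / a n m') * a n m' :=
                (div_mul_cancel₀ _ (ham' n).ne').symm
            _ ≤ D * a n m' := mul_le_mul_of_nonneg_right this (ham' n).le
      set Cu : ℝ := ∑' d, u d with hCu_def
      have hCupos : 0 < Cu := by
        have h0 : u 0 ≤ Cu := Summable.le_tsum hu 0 (fun j _ => hunn j)
        have : 0 < u 0 := mul_pos (abs_pos.2 hθ) (expos k' 0)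
        linarith
      refine ⟨Cu * D, mul_pos hCupos hDpos, fun x hx => ?_⟩
      set v : ℕ → ℝ := fun i => |x i| * infW β k' i with hv_def
      have hvnn : ∀ i, 0 ≤ v i := fun i => mul_nonneg (abs_nonneg _) (expos k' i).le
      have hdom : Summable fun i => D * (|x i| * a i m') := (hx m').mul_left D
      have hv : Summable v := by
        apply hdom.of_nonneg_of_le hvnn
        intro i
        calc v i = |x i| * infW β k' i := rfl
          _ ≤ |x i| * (D * a i m') := by
              have := hstar i
              nlinarith [abs_nonneg (x i)]
          _ = D * (|x i| * a i m') := by ring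
      have hvsum : ∑' i, v i ≤ D * kNorm a m' x := by
        have := Summable.tsum_le_tsum (f := v) (g := fun i => D * (|x i| * a i m'))
          (fun i => by
            have := hstar i
            have : v i ≤ D * (|x i| * a i m') := by
              simp only [hv_def]
              nlinarith [abs_nonneg (x i), hstar i]
            exact this) hv hdom
        rwa [tsum_mul_left] at this
      -- Cauchy product
      have hunorm : Summable fun d => ‖u d‖ := by
        simpa [Real.norm_eq_abs, abs_of_nonneg (hunn _)] using hu
      have hvnorm : Summable fun i => ‖v i‖ := by
        simpa [Real.norm_eq_abs, abs_of_nonneg (hvnn _)] using hv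
      have hcp := hasSum_sum_range_mul_of_summable_norm hunorm hvnorm
      set w : ℕ → ℝ := fun j => ∑ i ∈ Finset.range (j+1), u i * v (j - i) with hw_def
      have hwsummable : Summable w := hcp.summable
      have hwtsum : ∑' j, w j = Cu * (∑' i, v i) := hcp.tsum_eq
      have hpt : ∀ j, |hatT θ x j| * infW β k j ≤ w j := by
        intro j
        have habs : |hatT θ x j| ≤ ∑ i ∈ Finset.range (j+1), |θ (j - i) * x i| :=
          Finset.abs_sum_le_sum_abs _ _
        have step1 : |hatT θ x j| * infW β k j ≤
            ∑ i ∈ Finset.range (j+1), |θ (j - i) * x i| * infW β k j := by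
          rw [← Finset.sum_mul]
          exact mul_le_mul_of_nonneg_right habs (expos k j).le
        have step2 : ∑ i ∈ Finset.range (j+1), |θ (j - i) * x i| * infW β k j
            = ∑ i ∈ Finset.range (j+1), |θ i * x (j - i)| * infW β k j := by
          have := Finset.sum_range_reflect
            (fun i => |θ i * x (j - i)| * infW β k j) (j+1)
          rw [← this]
          apply Finset.sum_congr rfl
          intro i hi
          rw [Finset.mem_range, Nat.lt_succ_iff] at hi
          have e1 : j + 1 - 1 - i = j - i := by omega
          have e2 : j - (j - i) = i := by omega
          rw [e1, e2]
        have step3 : ∀ i ∈ Finset.range (j+1),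
            |θ i * x (j - i)| * infW β k j ≤ u i * v (j - i) := by
          intro i hi
          rw [Finset.mem_range, Nat.lt_succ_iff] at hi
          have hexp : infW β k j ≤ infW β k' i * infW β k' (j - i) := by
            rw [infW, infW, infW, ← Real.exp_add]
            apply Real.exp_le_exp.2
            have := key k i j hi
            linarith
          rw [abs_mul]
          calc |θ i| * |x (j - i)| * infW β k j
              ≤ |θ i| * |x (j - i)| * (infW β k' i * infW β k' (j - i)) := by
                apply mul_le_mul_of_nonneg_left hexp
                  (mul_nonneg (abs_nonneg _) (abs_nonneg _))
            _ = u i * v (j - i) := by simp only [hu_def, hv_def]; ring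
        calc |hatT θ x j| * infW β k j
            ≤ ∑ i ∈ Finset.range (j+1), |θ i * x (j - i)| * infW β k j := by
              rw [← step2]; exact step1
          _ ≤ w j := Finset.sum_le_sum step3
      have hsumm : Summable fun j => |hatT θ x j| * infW β k j :=
        hwsummable.of_nonneg_of_le
          (fun j => mul_nonneg (abs_nonneg _) (expos k j).le) hpt
      refine ⟨hsumm, ?_⟩
      have h1 : infNorm β k (hatT θ x) ≤ ∑' j, w j :=
        Summable.tsum_le_tsum hpt hsumm hwsummable
      have hknn : 0 ≤ kNorm a m' x :=
        tsum_nonneg fun i => mul_nonneg (abs_nonneg _) (ha.nonneg i m')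
      calc infNorm β k (hatT θ x) ≤ ∑' j, w j := h1
        _ = Cu * (∑' i, v i) := hwtsum
        _ ≤ Cu * (D * kNorm a m' x) :=
            mul_le_mul_of_nonneg_left hvsum hCupos.le
        _ = Cu * D * kNorm a m' x := by ring
    constructor
    · intro x hx k hk
      obtain ⟨C, hC, h⟩ := main k hk
      exact (h x hx).1
    · refine ⟨m', fun k hk => ?_⟩
      obtain ⟨C, hC, h⟩ := main k hk
      exact ⟨C, hC, fun x hx => (h x hx).2⟩
end
end

section
/- Let Λ_∞(α) be an infinite type power series space and Λ₁(β) a nuclear finite type power series space. Write T_θ = T̂_{θ̂} + Ť_{θ̌} with non-zero diagonal entries in each part. Then T_θ : Λ_∞(α) → Λ₁(β) is continuous if and only if it is compact, if and only if θ̂ ∈ Λ₁(β) and θ̌ ∈ (Λ_∞(α))′. -/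
open scoped BigOperators
noncomputable section

-- helper lemmas
lemma finW_pos (β : ℕ → ℝ) (k n : ℕ) : 0 < finW β k n := Real.exp_pos _
lemma infW_pos (β : ℕ → ℝ) (k n : ℕ) : 0 < infW β k n := Real.exp_pos _

lemma one_le_infW {α : ℕ → ℝ} (hα0 : ∀ n, 0 ≤ α n) (m n : ℕ) : 1 ≤ infW α m n :=
  Real.one_le_exp (mul_nonneg (Nat.cast_nonneg m) (hα0 n))

lemma infW_le_infW_k {α : ℕ → ℝ} (hα0 : ∀ n, 0 ≤ α n) {m m' : ℕ} (h : m ≤ m') (n : ℕ) :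
    infW α m n ≤ infW α m' n :=
  Real.exp_le_exp.2 (mul_le_mul_of_nonneg_right (Nat.cast_le.2 h) (hα0 n))

lemma infW_le_infW_n {α : ℕ → ℝ} (hαm : Monotone α) (m : ℕ) {n n' : ℕ} (h : n ≤ n') :
    infW α m n ≤ infW α m n' :=
  Real.exp_le_exp.2 (mul_le_mul_of_nonneg_left (hαm h) (Nat.cast_nonneg m))

lemma finW_le_finW_n {β : ℕ → ℝ} (hβm : Monotone β) {k : ℕ} (hk : 0 < k) {n n' : ℕ}
    (h : n' ≤ n) : finW β k n ≤ finW β k n' := by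
  apply Real.exp_le_exp.2
  rw [div_eq_mul_inv, div_eq_mul_inv]
  apply mul_le_mul_of_nonneg_right ?_ (inv_nonneg.2 (Nat.cast_nonneg k))
  simpa using hβm h

lemma finW_le_one {β : ℕ → ℝ} (hβ0 : ∀ n, 0 ≤ β n) (k n : ℕ) : finW β k n ≤ 1 := by
  rw [finW, ← Real.exp_zero]
  apply Real.exp_le_exp.2
  apply div_nonpos_of_nonpos_of_nonneg (by simpa using hβ0 n) (Nat.cast_nonneg k)

lemma summable_finW {β : ℕ → ℝ} (hβ0 : ∀ n, 0 ≤ β n)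
    (hnuc : ∀ k : ℕ, 0 < k → ∃ l, k < l ∧
      Summable fun n => Real.exp (-(β n) / (k : ℝ) + β n / (l : ℝ)))
    {k : ℕ} (hk : 0 < k) : Summable fun n => finW β k n := by
  obtain ⟨l, hkl, hs⟩ := hnuc k hk
  apply hs.of_nonneg_of_le (fun n => (finW_pos β k n).le)
  intro n
  apply Real.exp_le_exp.2
  have : (0:ℝ) ≤ β n / (l : ℝ) := div_nonneg (hβ0 n) (Nat.cast_nonneg l)
  linarith

lemma summable_abs_of_memInf {α : ℕ → ℝ} (hα0 : ∀ n, 0 ≤ α n) {x : ℕ → ℝ}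
    (hx : memInf α x) : Summable fun n => |x n| := by
  apply (hx 1 one_pos).of_nonneg_of_le (fun n => abs_nonneg _)
  intro n
  nlinarith [one_le_infW hα0 1 n, abs_nonneg (x n)]

lemma tsum_abs_le_infNorm {α : ℕ → ℝ} (hα0 : ∀ n, 0 ≤ α n) {x : ℕ → ℝ}
    (hx : memInf α x) {m : ℕ} (hm : 0 < m) : (∑' n, |x n|) ≤ infNorm α m x := by
  apply Summable.tsum_le_tsum ?_ (summable_abs_of_memInf hα0 hx) (hx m hm)
  intro n
  nlinarith [one_le_infW hα0 m n, abs_nonneg (x n)]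

lemma infNorm_nonneg (α : ℕ → ℝ) (m : ℕ) (x : ℕ → ℝ) : 0 ≤ infNorm α m x :=
  tsum_nonneg fun n => mul_nonneg (abs_nonneg _) (infW_pos α m n).le

lemma finNorm_nonneg (β : ℕ → ℝ) (k : ℕ) (x : ℕ → ℝ) : 0 ≤ finNorm β k x :=
  tsum_nonneg fun n => mul_nonneg (abs_nonneg _) (finW_pos β k n).le

section Backward

lemma check_term_bound {α : ℕ → ℝ} (hαm : Monotone α) {θc x : ℕ → ℝ} {C₀ : ℝ}
    (hC : 0 ≤ C₀) {m : ℕ} (hθc : ∀ n, |θc n| ≤ C₀ * infW α m n) (j i : ℕ) :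
    |θc i * x (j + i)| ≤ C₀ * (|x (j + i)| * infW α m (j + i)) := by
  rw [abs_mul]
  calc |θc i| * |x (j + i)| ≤ (C₀ * infW α m i) * |x (j + i)| :=
        mul_le_mul_of_nonneg_right (hθc i) (abs_nonneg _)
    _ ≤ (C₀ * infW α m (j + i)) * |x (j + i)| :=
        mul_le_mul_of_nonneg_right
          (mul_le_mul_of_nonneg_left (infW_le_infW_n hαm m (Nat.le_add_left i j)) hC)
          (abs_nonneg _)
    _ = C₀ * (|x (j + i)| * infW α m (j + i)) := by ring

lemma check_summable {α : ℕ → ℝ} (hαm : Monotone α) {θc x : ℕ → ℝ} {C₀ : ℝ}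
    (hC : 0 ≤ C₀) {m : ℕ} (hθc : ∀ n, |θc n| ≤ C₀ * infW α m n)
    (hx : Summable fun n => |x n| * infW α m n) (j : ℕ) :
    Summable fun i => |θc i * x (j + i)| := by
  have hs : Summable fun i => C₀ * (|x (j + i)| * infW α m (j + i)) :=
    ((hx.comp_injective (add_right_injective j)).mul_left C₀)
  exact hs.of_nonneg_of_le (fun i => abs_nonneg _) (check_term_bound hαm hC hθc j)

lemma check_bound {α : ℕ → ℝ} (hαm : Monotone α) {θc x : ℕ → ℝ} {C₀ : ℝ}
    (hC : 0 ≤ C₀) {m : ℕ} (hθc : ∀ n, |θc n| ≤ C₀ * infW α m n)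
    (hx : Summable fun n => |x n| * infW α m n) (j : ℕ) :
    |checkT θc x j| ≤ C₀ * infNorm α m x := by
  have h1 : |checkT θc x j| ≤ ∑' i, |θc i * x (j + i)| := by
    have hn := norm_tsum_le_tsum_norm (f := fun i => θc i * x (j + i))
      ((check_summable hαm hC hθc hx j).congr (fun i => (Real.norm_eq_abs _).symm))
    simpa only [Real.norm_eq_abs, checkT] using hn
  have h2 : (∑' i, |θc i * x (j + i)|) ≤ ∑' i, C₀ * (|x (j + i)| * infW α m (j + i)) :=
    Summable.tsum_le_tsum (check_term_bound hαm hC hθc j) (check_summable hαm hC hθc hx j)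
      ((hx.comp_injective (add_right_injective j)).mul_left C₀)
  have h3 : (∑' i, C₀ * (|x (j + i)| * infW α m (j + i))) ≤
      C₀ * infNorm α m x := by
    rw [tsum_mul_left, infNorm]
    apply mul_le_mul_of_nonneg_left ?_ hC
    exact Summable.tsum_le_tsum_of_inj (fun i => j + i) (add_right_injective j)
      (fun c _ => mul_nonneg (abs_nonneg _) (infW_pos α m c).le) (fun i => le_rfl)
      (hx.comp_injective (add_right_injective j)) hx
  exact h1.trans (h2.trans h3)

lemma hat_term_bound {β : ℕ → ℝ} (hβm : Monotone β) {θh x : ℕ → ℝ} {k : ℕ} (hk : 0 < k)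
    (j : ℕ) : |hatT θh x j| * finW β k j ≤
      ∑ i ∈ Finset.range (j + 1), |x i| * (|θh (j - i)| * finW β k (j - i)) := by
  calc |hatT θh x j| * finW β k j
      ≤ (∑ i ∈ Finset.range (j + 1), |θh (j - i) * x i|) * finW β k j :=
        mul_le_mul_of_nonneg_right (Finset.abs_sum_le_sum_abs _ _) (finW_pos β k j).le
    _ = ∑ i ∈ Finset.range (j + 1), |θh (j - i)| * |x i| * finW β k j := by
        rw [Finset.sum_mul]; congr 1; ext i; rw [abs_mul]
    _ ≤ ∑ i ∈ Finset.range (j + 1), |x i| * (|θh (j - i)| * finW β k (j - i)) := by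
        apply Finset.sum_le_sum
        intro i _
        have : finW β k j ≤ finW β k (j - i) := finW_le_finW_n hβm hk (Nat.sub_le j i)
        calc |θh (j - i)| * |x i| * finW β k j
            ≤ |θh (j - i)| * |x i| * finW β k (j - i) :=
              mul_le_mul_of_nonneg_left this (mul_nonneg (abs_nonneg _) (abs_nonneg _))
          _ = |x i| * (|θh (j - i)| * finW β k (j - i)) := by ring

lemma conv_summable {β : ℕ → ℝ} {θh x : ℕ → ℝ} {k : ℕ}
    (hθ : Summable fun n => |θh n| * finW β k n) (hx : Summable fun n => |x n|) :
    Summable fun j => ∑ i ∈ Finset.range (j + 1), |x i| * (|θh (j - i)| * finW β k (j - i)) := by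
  have h := summable_norm_sum_mul_range_of_summable_norm
    (f := fun n => |x n|) (g := fun n => |θh n| * finW β k n)
    (by simpa [abs_of_nonneg, abs_nonneg] using hx.abs)
    (by
      apply hθ.congr
      intro n
      rw [Real.norm_eq_abs, abs_of_nonneg (mul_nonneg (abs_nonneg _) (finW_pos β k n).le)])
  apply h.congr
  intro j
  rw [Real.norm_eq_abs, abs_of_nonneg]
  exact Finset.sum_nonneg fun i _ =>
    mul_nonneg (abs_nonneg _) (mul_nonneg (abs_nonneg _) (finW_pos β k _).le)

lemma conv_tsum_eq {β : ℕ → ℝ} {θh x : ℕ → ℝ} {k : ℕ}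
    (hθ : Summable fun n => |θh n| * finW β k n) (hx : Summable fun n => |x n|) :
    (∑' j, ∑ i ∈ Finset.range (j + 1), |x i| * (|θh (j - i)| * finW β k (j - i)))
      = (∑' n, |x n|) * finNorm β k θh := by
  rw [finNorm]
  exact (tsum_mul_tsum_eq_tsum_sum_range_of_summable_norm
    (f := fun n => |x n|) (g := fun n => |θh n| * finW β k n)
    (by simpa [abs_of_nonneg, abs_nonneg] using hx.abs)
    (by
      apply hθ.congr
      intro n
      rw [Real.norm_eq_abs, abs_of_nonneg (mul_nonneg (abs_nonneg _) (finW_pos β k n).le)])).symm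

end Backward

section Main

variable {α β : ℕ → ℝ} {θh θc : ℕ → ℝ}

lemma backward (hα0 : ∀ n, 0 ≤ α n) (hαm : Monotone α)
    (hβ0 : ∀ n, 0 ≤ β n) (hβm : Monotone β)
    (hnuc : ∀ k : ℕ, 0 < k → ∃ l, k < l ∧
      Summable fun n => Real.exp (-(β n) / (k : ℝ) + β n / (l : ℝ)))
    (hθh : memFin β θh) (m₀ : ℕ) (C₀ : ℝ) (hC₀ : 0 < C₀)
    (hθc : ∀ n, |θc n| ≤ C₀ * infW α m₀ n) :
    (∀ x, memInf α x → memFin β (fun j => hatT θh x j + checkT θc x j)) ∧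
    ∃ m, ∀ k : ℕ, 0 < k → ∃ C > 0, ∀ x, memInf α x →
      finNorm β k (fun j => hatT θh x j + checkT θc x j) ≤ C * infNorm α m x := by
  set m := m₀ + 1 with hm
  have hm0 : 0 < m := Nat.succ_pos _
  have hθc' : ∀ n, |θc n| ≤ C₀ * infW α m n := fun n =>
    (hθc n).trans (mul_le_mul_of_nonneg_left (infW_le_infW_k hα0 (Nat.le_succ m₀) n) hC₀.le)
  -- the pointwise bound for the full operator
  have key : ∀ x, memInf α x → ∀ k : ℕ, 0 < k → ∀ j,
      |hatT θh x j + checkT θc x j| * finW β k j ≤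
        (∑ i ∈ Finset.range (j + 1), |x i| * (|θh (j - i)| * finW β k (j - i)))
          + (C₀ * infNorm α m x) * finW β k j := by
    intro x hx k hk j
    have hxm := hx m hm0
    have h1 : |hatT θh x j + checkT θc x j| * finW β k j ≤
        |hatT θh x j| * finW β k j + |checkT θc x j| * finW β k j := by
      rw [← add_mul]
      exact mul_le_mul_of_nonneg_right (abs_add_le _ _) (finW_pos β k j).le
    have h2 := hat_term_bound (θh := θh) (x := x) hβm hk j
    have h3 : |checkT θc x j| * finW β k j ≤ (C₀ * infNorm α m x) * finW β k j :=
      mul_le_mul_of_nonneg_right (check_bound hαm hC₀.le hθc' hxm j) (finW_pos β k j).le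
    linarith
  have rhs_summable : ∀ x, memInf α x → ∀ k : ℕ, 0 < k →
      Summable fun j =>
        (∑ i ∈ Finset.range (j + 1), |x i| * (|θh (j - i)| * finW β k (j - i)))
          + (C₀ * infNorm α m x) * finW β k j := by
    intro x hx k hk
    exact (conv_summable (hθh k hk) (summable_abs_of_memInf hα0 hx)).add
      ((summable_finW hβ0 hnuc hk).mul_left _)
  have memfin : ∀ x, memInf α x → memFin β (fun j => hatT θh x j + checkT θc x j) := by
    intro x hx k hk
    exact (rhs_summable x hx k hk).of_nonneg_of_le
      (fun j => mul_nonneg (abs_nonneg _) (finW_pos β k j).le) (key x hx k hk)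
  refine ⟨memfin, m, fun k hk => ?_⟩
  set Sk := ∑' n, finW β k n with hSk
  have hSknn : 0 ≤ Sk := tsum_nonneg fun n => (finW_pos β k n).le
  refine ⟨finNorm β k θh + C₀ * Sk + 1, by nlinarith [finNorm_nonneg β k θh, mul_nonneg hC₀.le hSknn], fun x hx => ?_⟩
  have h1 : finNorm β k (fun j => hatT θh x j + checkT θc x j) ≤
      (∑' j, ∑ i ∈ Finset.range (j + 1), |x i| * (|θh (j - i)| * finW β k (j - i)))
        + (C₀ * infNorm α m x) * Sk := by
    rw [finNorm]
    have := Summable.tsum_le_tsum (key x hx k hk) (memfin x hx k hk) (rhs_summable x hx k hk)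
    rw [Summable.tsum_add (conv_summable (hθh k hk) (summable_abs_of_memInf hα0 hx))
      ((summable_finW hβ0 hnuc hk).mul_left _), tsum_mul_left] at this
    exact this
  have h2 : (∑' j, ∑ i ∈ Finset.range (j + 1), |x i| * (|θh (j - i)| * finW β k (j - i)))
      = (∑' n, |x n|) * finNorm β k θh :=
    conv_tsum_eq (hθh k hk) (summable_abs_of_memInf hα0 hx)
  have h3 : (∑' n, |x n|) ≤ infNorm α m x := tsum_abs_le_infNorm hα0 hx hm0
  have hIn : 0 ≤ infNorm α m x := infNorm_nonneg α m x
  have hfn : 0 ≤ finNorm β k θh := finNorm_nonneg β k θh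
  calc finNorm β k (fun j => hatT θh x j + checkT θc x j)
      ≤ (∑' n, |x n|) * finNorm β k θh + (C₀ * infNorm α m x) * Sk := by rw [← h2]; exact h1
    _ ≤ infNorm α m x * finNorm β k θh + (C₀ * infNorm α m x) * Sk := by
        nlinarith [mul_le_mul_of_nonneg_right h3 hfn]
    _ ≤ (finNorm β k θh + C₀ * Sk + 1) * infNorm α m x := by nlinarith

end Main

section Forward

variable {α β : ℕ → ℝ} {θh θc : ℕ → ℝ}

lemma unit_memInf (α : ℕ → ℝ) (n : ℕ) : memInf α (unitVec n) := by
  intro k _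
  apply summable_of_ne_finset_zero (s := {n})
  intro j hj
  simp only [Finset.mem_singleton] at hj
  simp [unitVec, hj]

lemma infNorm_unit {α : ℕ → ℝ} (m n : ℕ) : infNorm α m (unitVec n) = infW α m n := by
  rw [infNorm]
  rw [tsum_eq_single n]
  · simp [unitVec]
  · intro j hj
    simp [unitVec, hj]

lemma hatT_unit (θ : ℕ → ℝ) (n j : ℕ) :
    hatT θ (unitVec n) j = if n ≤ j then θ (j - n) else 0 := by
  rw [hatT]
  simp only [unitVec, mul_ite, mul_one, mul_zero]
  rw [Finset.sum_ite_eq' (Finset.range (j + 1)) n (fun i => θ (j - i))]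
  simp [Nat.lt_succ_iff]

lemma checkT_unit (θ : ℕ → ℝ) (n j : ℕ) :
    checkT θ (unitVec n) j = if j ≤ n then θ (n - j) else 0 := by
  rw [checkT]
  by_cases h : j ≤ n
  · rw [tsum_eq_single (n - j)]
    · simp [unitVec, Nat.add_sub_cancel' h, h]
    · intro i hi
      have : j + i ≠ n := fun hc => hi (by omega)
      simp [unitVec, this]
  · rw [if_neg h]
    have : ∀ i, θ i * unitVec n (j + i) = 0 := by
      intro i
      have : j + i ≠ n := by omega
      simp [unitVec, this]
    simp [this]

lemma forward (hα0 : ∀ n, 0 ≤ α n)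
    (hA : ∀ x, memInf α x → memFin β (fun j => hatT θh x j + checkT θc x j))
    (hB : ∃ m, ∃ C > 0, ∀ x, memInf α x →
      finNorm β 1 (fun j => hatT θh x j + checkT θc x j) ≤ C * infNorm α m x) :
    memFin β θh ∧ ∃ m, ∃ C > 0, ∀ n, |θc n| ≤ C * infW α m n := by
  have hT0 : ∀ j, hatT θh (unitVec 0) j + checkT θc (unitVec 0) j
      = θh j + (if j = 0 then θc 0 else 0) := by
    intro j
    rw [hatT_unit, checkT_unit]
    simp only [Nat.zero_le, if_true, Nat.sub_zero, Nat.le_zero]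
    split_ifs with h
    · subst h; rfl
    · rfl
  constructor
  · -- θh ∈ Λ₁(β)
    intro k hk
    have hs := hA (unitVec 0) (unit_memInf α 0) k hk
    simp only [hT0] at hs
    have hc : Summable fun j => |(if j = 0 then θc 0 else 0 : ℝ)| * finW β k j := by
      apply summable_of_ne_finset_zero (s := {0})
      intro j hj
      simp only [Finset.mem_singleton] at hj
      simp [hj]
    apply (hs.add hc).of_nonneg_of_le
      (fun j => mul_nonneg (abs_nonneg _) (finW_pos β k j).le)
    intro j
    have habs : |θh j| ≤ |θh j + (if j = 0 then θc 0 else 0)| + |(if j = 0 then θc 0 else 0 : ℝ)| := by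
      have := abs_add_le (θh j + (if j = 0 then θc 0 else 0)) (-(if j = 0 then θc 0 else 0 : ℝ))
      simpa using this
    calc |θh j| * finW β k j
        ≤ (|θh j + (if j = 0 then θc 0 else 0)| + |(if j = 0 then θc 0 else 0 : ℝ)|) * finW β k j :=
          mul_le_mul_of_nonneg_right habs (finW_pos β k j).le
      _ = |θh j + (if j = 0 then θc 0 else 0)| * finW β k j
            + |(if j = 0 then θc 0 else 0 : ℝ)| * finW β k j := by ring
  · -- θc ∈ (Λ_∞(α))'
    obtain ⟨m, C, hC, hb⟩ := hB
    refine ⟨m, C / finW β 1 0 + |θc 0|,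
      add_pos_of_pos_of_nonneg (div_pos hC (finW_pos β 1 0)) (abs_nonneg _), fun n => ?_⟩
    have hw1 : (1:ℝ) ≤ infW α m n := one_le_infW hα0 m n
    have hCw : 0 ≤ C / finW β 1 0 := (div_pos hC (finW_pos β 1 0)).le
    rcases Nat.eq_zero_or_pos n with hn | hn
    · subst hn
      nlinarith [abs_nonneg (θc 0), infW_pos α m 0]
    · -- n ≥ 1 : evaluate at the unit vector e_n
      have hsum := hA (unitVec n) (unit_memInf α n) 1 one_pos
      have hle := hb (unitVec n) (unit_memInf α n)
      rw [infNorm_unit] at hle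
      have hterm : |θc n| * finW β 1 0 ≤ finNorm β 1
          (fun j => hatT θh (unitVec n) j + checkT θc (unitVec n) j) := by
        have h0 : hatT θh (unitVec n) 0 + checkT θc (unitVec n) 0 = θc n := by
          rw [hatT_unit, checkT_unit]
          have h1 : ¬ n ≤ 0 := by omega
          simp [h1, Nat.zero_le n]
        have hts := Summable.le_tsum hsum 0
          (fun j _ => mul_nonneg (abs_nonneg _) (finW_pos β 1 j).le)
        rw [finNorm]
        simpa only [h0] using hts
      have hfw : 0 < finW β 1 0 := finW_pos β 1 0
      have : |θc n| ≤ C / finW β 1 0 * infW α m n := by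
        rw [div_mul_eq_mul_div, le_div_iff₀ hfw]
        calc |θc n| * finW β 1 0 ≤ C * infW α m n := hterm.trans hle
          _ = C * infW α m n := rfl
        
      nlinarith [abs_nonneg (θc 0)]

end Forward

/-- For `Λ₁(β)` nuclear and `T_θ = T̂_{θ̂} + Ť_{θ̌}` (both diagonal
entries non-zero), `T_θ : Λ_∞(α) → Λ₁(β)` is continuous iff it is compact iff
`θ̂ ∈ Λ₁(β)` and `θ̌ ∈ (Λ_∞(α))'`. -/
theorem stmt19 (α β : ℕ → ℝ)
    (hα0 : ∀ n, 0 ≤ α n) (hαm : Monotone α)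
    (hαi : Filter.Tendsto α Filter.atTop Filter.atTop)
    (hβ0 : ∀ n, 0 ≤ β n) (hβm : Monotone β)
    (hβi : Filter.Tendsto β Filter.atTop Filter.atTop)
    (hnuc : ∀ k : ℕ, 0 < k → ∃ l, k < l ∧
      Summable fun n => Real.exp (-(β n) / (k : ℝ) + β n / (l : ℝ)))
    (θh θc : ℕ → ℝ) (hh : θh 0 ≠ 0) (hc : θc 0 ≠ 0) :
    (((∀ x, memInf α x → memFin β (fun j => hatT θh x j + checkT θc x j)) ∧
        ∀ k : ℕ, 0 < k → ∃ m, ∃ C > 0, ∀ x, memInf α x →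
          finNorm β k (fun j => hatT θh x j + checkT θc x j) ≤ C * infNorm α m x)
      ↔ (memFin β θh ∧ ∃ m, ∃ C > 0, ∀ n, |θc n| ≤ C * infW α m n)) ∧
    (((∀ x, memInf α x → memFin β (fun j => hatT θh x j + checkT θc x j)) ∧
        ∃ m, ∀ k : ℕ, 0 < k → ∃ C > 0, ∀ x, memInf α x →
          finNorm β k (fun j => hatT θh x j + checkT θc x j) ≤ C * infNorm α m x)
      ↔ (memFin β θh ∧ ∃ m, ∃ C > 0, ∀ n, |θc n| ≤ C * infW α m n)) := by
  have fwd : ((∀ x, memInf α x → memFin β (fun j => hatT θh x j + checkT θc x j)) ∧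
      ∀ k : ℕ, 0 < k → ∃ m, ∃ C > 0, ∀ x, memInf α x →
        finNorm β k (fun j => hatT θh x j + checkT θc x j) ≤ C * infNorm α m x) →
      (memFin β θh ∧ ∃ m, ∃ C > 0, ∀ n, |θc n| ≤ C * infW α m n) := by
    rintro ⟨hA, hB⟩
    exact forward hα0 hA (hB 1 one_pos)
  have bwd : (memFin β θh ∧ ∃ m, ∃ C > 0, ∀ n, |θc n| ≤ C * infW α m n) →
      ((∀ x, memInf α x → memFin β (fun j => hatT θh x j + checkT θc x j)) ∧
      ∃ m, ∀ k : ℕ, 0 < k → ∃ C > 0, ∀ x, memInf α x →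
        finNorm β k (fun j => hatT θh x j + checkT θc x j) ≤ C * infNorm α m x) := by
    rintro ⟨hP, m₀, C₀, hC₀, hQ⟩
    exact backward hα0 hαm hβ0 hβm hnuc hP m₀ C₀ hC₀ hQ
  constructor
  · constructor
    · exact fwd
    · intro h
      obtain ⟨hA, m, hm⟩ := bwd h
      exact ⟨hA, fun k hk => ⟨m, hm k hk⟩⟩
  · constructor
    · rintro ⟨hA, m, hB'⟩
      exact fwd ⟨hA, fun k hk => ⟨m, hB' k hk⟩⟩
    · exact bwd
end
end
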